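/- (Small-noise expansion of the mutual information gap for the M-ary symmetric channel.) Let X = (X_1, …, X_p) have a tree-structured distribution with uniform node marginals on [M], let ((w, w̄), u, ū) ∈ EV², and let Y_w, Y_w̄, Y_u, Y_ū be the outputs of the M-ary symmetric channel with crossover probability q applied independently to X_w, X_w̄, X_u, X_ū. Set ε = (1 − (1−q)²)/M². Then, as q → 0, I(Y_w; Y_w̄) − I(Y_u; Y_ū) = (1−q)² [ I(X_w; X_w̄) − I(X_u; X_ū) ] − (1 − (1−q)²) [ D_KL(U ‖ p(x_w, x_w̄)) − D_KL(U ‖ p(x_u, x_ū)) ] + O(ε²), where U is the uniform distribution on [M]² and p(x_w, x_w̄), p(x_u, x_ū) denote the joint pairwise distributions of the respective input pairs; i.e., the remainder term is bounded in absolute value by K ε² for some constant K depending only on M and the input distribution, for all sufficiently small q. -/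

import Mathlib

set_option linter.unusedSectionVars false

open scoped Classical

noncomputable section

namespace TreePaper

/-- `f` is a probability mass function. -/
def IsProbDist {α : Type*} (f : α → ℝ) : Prop :=
  (∀ a, 0 ≤ f a) ∧ ∑' a, f a = 1

/-- Shannon entropy (base 2) of a pmf, with the convention `0 · log 0 = 0`. -/
def ent {α : Type*} (f : α → ℝ) : ℝ := -∑' a, f a * Real.logb 2 (f a)

variable {V : Type*} [Fintype V] [DecidableEq V] {A : Type*}

/-- Marginal pmf of the coordinate `i`. -/
def marg1 (P : (V → A) → ℝ) (i : V) : A → ℝ :=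
  fun a => ∑' x : V → A, if x i = a then P x else 0

/-- Joint pmf of the pair of coordinates `(i, j)`. -/
def marg2 (P : (V → A) → ℝ) (i j : V) : A × A → ℝ :=
  fun ab => ∑' x : V → A, if x i = ab.1 ∧ x j = ab.2 then P x else 0

theorem marg2_symm (P : (V → A) → ℝ) (i j : V) (a b : A) :
    marg2 P i j (a, b) = marg2 P j i (b, a) :=
  tsum_congr fun _ => if_congr and_comm rfl rfl

/-- Mutual information (in bits) between the coordinates `i` and `j`,
`I(X_i; X_j) = H(X_i) + H(X_j) − H(X_i, X_j)`. -/
def mi (P : (V → A) → ℝ) (i j : V) : ℝ :=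
  ent (marg1 P i) + ent (marg1 P j) - ent (marg2 P i j)

/-- The factor attached to an edge in the tree factorization of a Markov random field. -/
def edgeFactor (P : (V → A) → ℝ) (x : V → A) : Sym2 V → ℝ :=
  Sym2.lift ⟨fun i j => marg2 P i j (x i, x j) / (marg1 P i (x i) * marg1 P j (x j)),
    fun i j => by
      dsimp only
      rw [marg2_symm P i j (x i) (x j), mul_comm (marg1 P i (x i)) (marg1 P j (x j))]⟩

/-- The distribution `P` is Markov with respect to (i.e. factorizes according to)
the tree `T`:  `p(x) = ∏_i p(x_i) ∏_{(i,j) ∈ E} p(x_i, x_j) / (p(x_i) p(x_j))`. -/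
def IsMarkovTree (T : SimpleGraph V) (P : (V → A) → ℝ) : Prop :=
  ∀ x : V → A,
    P x = (∏ i, marg1 P i (x i)) *
      ∏ e : Sym2 V, if e ∈ T.edgeSet then edgeFactor P x e else 1

/-- The tuple `(s(w, w̄), u, ū)` lies in the feasibility set `EV²`:  `s(w, w̄)` is an
edge of `T` lying on the unique path of `T` from `u` to `ū`, and this path has
at least two edges. -/
def EVtuple (T : SimpleGraph V) (w wb u ub : V) : Prop :=
  T.Adj w wb ∧ ∃ p : T.Walk u ub, p.IsPath ∧ s(w, wb) ∈ p.edges ∧ 2 ≤ p.length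

/-- The information threshold determined by the tree `T` and the
pairwise "mutual information" weights `I`:
`(1/2) · min_{(e,u,ū) ∈ EV²} ( I(w, w̄) − I(u, ū) )`. -/
def thresh (T : SimpleGraph V) (I : V → V → ℝ) : ℝ :=
  (1 / 2) * sInf {x : ℝ | ∃ w wb u ub : V, EVtuple T w wb u ub ∧ x = I w wb - I u ub}

/-- Total weight of the graph `G` under the edge weights `I`. -/
def score (I : V → V → ℝ) (G : SimpleGraph V) : ℝ :=
  ∑ i, ∑ j, if G.Adj i j then I i j else 0

/-- `G` is a maximum-weight spanning tree for the weights `I`. -/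
def IsMaxSpanTree (I : V → V → ℝ) (G : SimpleGraph V) : Prop :=
  G.IsTree ∧ ∀ G' : SimpleGraph V, G'.IsTree → score I G' ≤ score I G

/-- Shannon entropy (base 2) of a pmf on a finite alphabet. -/
def entF {α : Type*} [Fintype α] (f : α → ℝ) : ℝ :=
  -∑ a, f a * Real.logb 2 (f a)

/-- Mutual information (base 2) of a pair with joint pmf `f` on a finite alphabet:
`I(X; Y) = H(X) + H(Y) − H(X, Y)`. -/
def miF {α β : Type*} [Fintype α] [Fintype β] (f : α × β → ℝ) : ℝ :=
  entF (fun a => ∑ b, f (a, b)) + entF (fun b => ∑ a, f (a, b)) - entF f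

/-- Joint pmf of a pair of outputs of the `M`-ary symmetric channel with
crossover probability `q`, given the joint input pmf `f`:
`p_†(y) = (1−q)² f(y) + (1 − (1−q)²)/M²`. -/
def symOut (M : ℕ) (q : ℝ) (f : Fin M × Fin M → ℝ) : Fin M × Fin M → ℝ :=
  fun y => (1 - q) ^ 2 * f y + (1 - (1 - q) ^ 2) / (M : ℝ) ^ 2

/-- KL divergence (base 2) from the pmf `f` on `[M]²` to the uniform distribution
`U` on `[M]²`:  `D_KL(U ‖ f)`. -/
def klFromUnif (M : ℕ) (f : Fin M × Fin M → ℝ) : ℝ :=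
  ∑ a : Fin M × Fin M, ((M : ℝ) ^ 2)⁻¹ * Real.logb 2 (((M : ℝ) ^ 2)⁻¹ / f a)


private lemma log_taylor_ub {r : ℝ} (hr : 0 < 1 + r) :
    0 ≤ (1 + r) * Real.log (1 + r) - r ∧ (1 + r) * Real.log (1 + r) - r ≤ r ^ 2 := by
  constructor
  · have h := Real.log_le_sub_one_of_pos (x := (1+r)⁻¹) (by positivity)
    rw [Real.log_inv] at h
    have h2 : 1 - (1+r)⁻¹ ≤ Real.log (1+r) := by linarith
    have h3 : (1 + r) * (1 - (1+r)⁻¹) ≤ (1+r) * Real.log (1+r) :=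
      mul_le_mul_of_nonneg_left h2 (le_of_lt hr)
    have h4 : (1 + r) * (1 - (1+r)⁻¹) = r := by field_simp; ring
    linarith
  · have h := Real.log_le_sub_one_of_pos hr
    have h3 : (1+r) * Real.log (1+r) ≤ (1+r) * ((1+r) - 1) :=
      mul_le_mul_of_nonneg_left h (le_of_lt hr)
    nlinarith

private lemma taylor_log {c d : ℝ} (hc : 0 < c) (hcd : 0 < c + d) :
    |(-((c + d) * Real.log (c + d))) + c * Real.log c + d * (Real.log c + 1)| ≤ d ^ 2 / c := by
  set r := d / c with hrdef
  have hd : d = c * r := by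
    rw [hrdef, mul_div_assoc', mul_comm, mul_div_assoc, div_self hc.ne', mul_one]
  have hcd' : c + d = c * (1 + r) := by rw [hd]; ring
  have hr : 0 < 1 + r := by
    by_contra h
    push_neg at h
    nlinarith [hcd, hc]
  have hlog : Real.log (c + d) = Real.log c + Real.log (1 + r) := by
    rw [hcd', Real.log_mul hc.ne' hr.ne']
  have key := log_taylor_ub hr
  have hE : (-((c + d) * Real.log (c + d))) + c * Real.log c + d * (Real.log c + 1)
      = -(c * ((1 + r) * Real.log (1 + r) - r)) := by
    rw [hlog, hcd', hd]; ring
  rw [hE, abs_neg, abs_of_nonneg (mul_nonneg hc.le key.1)]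
  have h1 : c * ((1+r)*Real.log (1+r) - r) ≤ c * r^2 := mul_le_mul_of_nonneg_left key.2 hc.le
  have h2 : c * r ^ 2 = d ^ 2 / c := by
    rw [hd]; field_simp
  linarith

private lemma taylor_logb {c d : ℝ} (hc : 0 < c) (hcd : 0 < c + d) :
    |(-((c + d) * Real.logb 2 (c + d))) + c * Real.logb 2 c +
        d * (Real.logb 2 c + (Real.log 2)⁻¹)| ≤ d ^ 2 / (c * Real.log 2) := by
  have h2 : (0:ℝ) < Real.log 2 := Real.log_pos one_lt_two
  have hE : (-((c + d) * Real.logb 2 (c + d))) + c * Real.logb 2 c +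
        d * (Real.logb 2 c + (Real.log 2)⁻¹)
      = ((-((c + d) * Real.log (c + d))) + c * Real.log c + d * (Real.log c + 1)) / Real.log 2 := by
    simp only [Real.logb]
    field_simp
  rw [hE, abs_div, abs_of_pos h2,
    show d ^ 2 / (c * Real.log 2) = (d ^ 2 / c) / Real.log 2 by ring]
  gcongr
  exact taylor_log hc hcd

private lemma sum_taylor_bound {α : Type*} [Fintype α] (f d : α → ℝ)
    (hf : ∀ a, 0 < f a) (hfd : ∀ a, 0 < f a + d a) :
    |(-(∑ a, (f a + d a) * Real.logb 2 (f a + d a))) + (∑ a, f a * Real.logb 2 (f a))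
        + ∑ a, d a * (Real.logb 2 (f a) + (Real.log 2)⁻¹)|
      ≤ ∑ a, (d a) ^ 2 / (f a * Real.log 2) := by
  have h1 : (-(∑ a, (f a + d a) * Real.logb 2 (f a + d a))) + (∑ a, f a * Real.logb 2 (f a))
        + ∑ a, d a * (Real.logb 2 (f a) + (Real.log 2)⁻¹)
      = ∑ a, ((-((f a + d a) * Real.logb 2 (f a + d a))) + f a * Real.logb 2 (f a)
          + d a * (Real.logb 2 (f a) + (Real.log 2)⁻¹)) := by
    rw [Finset.sum_add_distrib, Finset.sum_add_distrib, Finset.sum_neg_distrib]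
  rw [h1]
  refine (Finset.abs_sum_le_sum_abs _ _).trans (Finset.sum_le_sum fun a _ => ?_)
  exact taylor_logb (hf a) (hfd a)

/-- **Small-noise expansion of the mutual information gap for the M-ary symmetric
channel.**  For a tree-structured `X` with uniform node marginals on `[M]` and a
tuple `((w, w̄), u, ū) ∈ EV²`, with `ε = (1−(1−q)²)/M²`, as `q → 0`:
`I(Y_w; Y_w̄) − I(Y_u; Y_ū) = (1−q)²[I(X_w; X_w̄) − I(X_u; X_ū)]
  − (1−(1−q)²)[D_KL(U‖p(x_w, x_w̄)) − D_KL(U‖p(x_u, x_ū))] + O(ε²)`,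
the remainder being bounded by `K ε²` for a constant `K` (depending only on `M`
and the input distribution) for all sufficiently small `q > 0`. -/
theorem small_noise_expansion_mi_gap
    {V : Type*} [Fintype V] [DecidableEq V] (M : ℕ) (hM : 0 < M)
    (T : SimpleGraph V) (hT : T.IsTree)
    (P : (V → Fin M) → ℝ) (hP : IsProbDist P) (hMarkov : IsMarkovTree T P)
    (hunif : ∀ (i : V) (a : Fin M), marg1 P i a = 1 / (M : ℝ))
    (w wb u ub : V) (hEV : EVtuple T w wb u ub)
    (hposW : ∀ ab : Fin M × Fin M, 0 < marg2 P w wb ab)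
    (hposU : ∀ ab : Fin M × Fin M, 0 < marg2 P u ub ab) :
    ∃ K : ℝ, 0 < K ∧ ∃ q0 : ℝ, 0 < q0 ∧ ∀ q : ℝ, 0 < q → q ≤ q0 →
      |miF (symOut M q (marg2 P w wb)) - miF (symOut M q (marg2 P u ub))
          - ((1 - q) ^ 2 * (miF (marg2 P w wb) - miF (marg2 P u ub))
            - (1 - (1 - q) ^ 2) *
              (klFromUnif M (marg2 P w wb) - klFromUnif M (marg2 P u ub)))|
        ≤ K * ((1 - (1 - q) ^ 2) / (M : ℝ) ^ 2) ^ 2 := by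
  classical
  have hlog2 : (0:ℝ) < Real.log 2 := Real.log_pos one_lt_two
  have hM0 : ((M:ℝ)) ≠ 0 := Nat.cast_ne_zero.mpr hM.ne'
  have hMpos : (0:ℝ) < (M:ℝ) := Nat.cast_pos.mpr hM
  set N : ℝ := (M:ℝ)^2 with hN
  have hNpos : (0:ℝ) < N := by rw [hN]; positivity
  have hcard : ((Fintype.card (Fin M × Fin M)):ℝ) = N := by
    rw [hN]
    simp [Fintype.card_prod, Finset.card_univ, Fintype.card_fin]
    push_cast
    ring
  -- marginal row/column sums
  have hmarg_row : ∀ (i j : V) (a : Fin M), ∑ b, marg2 P i j (a, b) = marg1 P i a := by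
    intro i j a
    simp only [marg2, marg1, tsum_fintype]
    rw [Finset.sum_comm]
    refine Finset.sum_congr rfl fun x _ => ?_
    by_cases h : x i = a
    · simp [h, Finset.sum_ite_eq, Finset.sum_ite_eq']
    · simp [h]
  have hmarg_col : ∀ (i j : V) (b : Fin M), ∑ a, marg2 P i j (a, b) = marg1 P j b := by
    intro i j b
    simp only [marg2, marg1, tsum_fintype]
    rw [Finset.sum_comm]
    refine Finset.sum_congr rfl fun x _ => ?_
    by_cases h : x j = b
    · simp [h, Finset.sum_ite_eq, Finset.sum_ite_eq']
    · simp [h]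
  have hrowW : ∀ a, ∑ b, marg2 P w wb (a, b) = 1 / (M:ℝ) := fun a => by
    rw [hmarg_row, hunif]
  have hcolW : ∀ b, ∑ a, marg2 P w wb (a, b) = 1 / (M:ℝ) := fun b => by
    rw [hmarg_col, hunif]
  have hrowU : ∀ a, ∑ b, marg2 P u ub (a, b) = 1 / (M:ℝ) := fun a => by
    rw [hmarg_row, hunif]
  have hcolU : ∀ b, ∑ a, marg2 P u ub (a, b) = 1 / (M:ℝ) := fun b => by
    rw [hmarg_col, hunif]
  have hsum_of_row : ∀ F : Fin M × Fin M → ℝ, (∀ a, ∑ b, F (a, b) = 1 / (M:ℝ)) →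
      ∑ ab, F ab = 1 := by
    intro F hF
    rw [Fintype.sum_prod_type]
    rw [Finset.sum_congr rfl fun a _ => hF a, Finset.sum_const, Finset.card_univ, Fintype.card_fin,
      nsmul_eq_mul]
    field_simp
  have hsumW := hsum_of_row _ hrowW
  have hsumU := hsum_of_row _ hrowU
  -- entropy of the uniform marginal
  have hentU : entF (fun _ : Fin M => 1 / (M:ℝ)) = Real.logb 2 M := by
    simp only [entF, Finset.sum_const, Finset.card_univ, Fintype.card_fin, nsmul_eq_mul]
    rw [one_div, Real.logb_inv]
    field_simp
  have hmiF : ∀ (F : Fin M × Fin M → ℝ),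
      (∀ a, ∑ b, F (a, b) = 1 / (M:ℝ)) → (∀ b, ∑ a, F (a, b) = 1 / (M:ℝ)) →
      miF F = 2 * Real.logb 2 M - entF F := by
    intro F h1 h2
    unfold miF
    rw [show (fun a => ∑ b, F (a,b)) = (fun _ : Fin M => 1/(M:ℝ)) from funext h1,
        show (fun b => ∑ a, F (a,b)) = (fun _ : Fin M => 1/(M:ℝ)) from funext h2,
        hentU]
    ring
  have hrowOut : ∀ (F : Fin M × Fin M → ℝ), (∀ a, ∑ b, F (a,b) = 1/(M:ℝ)) → ∀ (q : ℝ) (a : Fin M),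
      ∑ b, symOut M q F (a, b) = 1 / (M:ℝ) := by
    intro F hF q a
    simp only [symOut]
    rw [Finset.sum_add_distrib, ← Finset.mul_sum, hF, Finset.sum_const, Finset.card_univ, Fintype.card_fin,
      nsmul_eq_mul]
    field_simp
    ring
  have hcolOut : ∀ (F : Fin M × Fin M → ℝ), (∀ b, ∑ a, F (a,b) = 1/(M:ℝ)) → ∀ (q : ℝ) (b : Fin M),
      ∑ a, symOut M q F (a, b) = 1 / (M:ℝ) := by
    intro F hF q b
    simp only [symOut]
    rw [Finset.sum_add_distrib, ← Finset.mul_sum, hF, Finset.sum_const, Finset.card_univ, Fintype.card_fin,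
      nsmul_eq_mul]
    field_simp
    ring
  refine ⟨(∑ a, (1 - N * marg2 P w wb a)^2 / (marg2 P w wb a * Real.log 2))
      + (∑ a, (1 - N * marg2 P u ub a)^2 / (marg2 P u ub a * Real.log 2)) + 1, ?_, 1, one_pos, ?_⟩
  · have h1 : 0 ≤ ∑ a, (1 - N * marg2 P w wb a)^2 / (marg2 P w wb a * Real.log 2) :=
      Finset.sum_nonneg fun a _ => div_nonneg (sq_nonneg _) (mul_nonneg (hposW a).le hlog2.le)
    have h2 : 0 ≤ ∑ a, (1 - N * marg2 P u ub a)^2 / (marg2 P u ub a * Real.log 2) :=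
      Finset.sum_nonneg fun a _ => div_nonneg (sq_nonneg _) (mul_nonneg (hposU a).le hlog2.le)
    linarith
  intro q hq hq1
  set t : ℝ := (1 - q)^2 with ht
  have ht0 : 0 ≤ t := sq_nonneg _
  have ht1 : t < 1 := by rw [ht]; nlinarith
  set ε : ℝ := (1 - t)/N with hε
  have hεpos : 0 < ε := div_pos (by linarith) hNpos
  have h1t : 1 - t = N * ε := by rw [hε]; field_simp
  -- per-distribution expansion
  have main : ∀ F : Fin M × Fin M → ℝ, (∀ a, 0 < F a) → (∑ a, F a = 1) →
      |entF (symOut M q F) - (t * entF F + (1 - t) * klFromUnif M F) - N * ε * Real.logb 2 N|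
        ≤ (∑ a, (1 - N * F a)^2 / (F a * Real.log 2)) * ε ^ 2 := by
    intro F hFpos hFsum
    set d : Fin M × Fin M → ℝ := fun a => ε * (1 - N * F a) with hd
    have hfd' : ∀ a, F a + d a = t * F a + ε := by
      intro a
      simp only [hd]
      linear_combination (F a) * h1t
    have hfd : ∀ a, F a + d a = symOut M q F a := by
      intro a
      rw [hfd' a]
      simp only [symOut, ← ht, ← hN, ← hε]
    have hpos_fd : ∀ a, 0 < F a + d a := fun a => by
      rw [hfd' a]
      exact add_pos_of_nonneg_of_pos (mul_nonneg ht0 (hFpos a).le) hεpos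
    have hsd : ∑ a, d a = 0 := by
      simp only [hd]
      rw [← Finset.mul_sum, Finset.sum_sub_distrib, Finset.sum_const, ← Finset.mul_sum, hFsum,
        nsmul_eq_mul, mul_one, Finset.card_univ, hcard]
      ring
    have hEq : entF (symOut M q F) = -∑ a, (F a + d a) * Real.logb 2 (F a + d a) := by
      simp only [entF]
      congr 1
      exact Finset.sum_congr rfl fun a _ => by rw [← hfd a]
    have hkl : klFromUnif M F = -Real.logb 2 N - N⁻¹ * ∑ a, Real.logb 2 (F a) := by
      simp only [klFromUnif, ← hN]
      have hterm : ∀ a : Fin M × Fin M, N⁻¹ * Real.logb 2 (N⁻¹ / F a)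
          = N⁻¹ * (-Real.logb 2 N) - N⁻¹ * Real.logb 2 (F a) := by
        intro a
        rw [Real.logb_div (inv_ne_zero hNpos.ne') (hFpos a).ne', Real.logb_inv]
        ring
      rw [Finset.sum_congr rfl fun a _ => hterm a, Finset.sum_sub_distrib, Finset.sum_const,
        ← Finset.mul_sum, nsmul_eq_mul, Finset.card_univ, hcard]
      field_simp
    have hL : ∑ a, d a * (Real.logb 2 (F a) + (Real.log 2)⁻¹)
        = N * ε * entF F + ε * ∑ a, Real.logb 2 (F a) := by
      have h1 : ∀ a, d a * (Real.logb 2 (F a) + (Real.log 2)⁻¹)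
          = ε * Real.logb 2 (F a) - (N*ε) * (F a * Real.logb 2 (F a)) + (Real.log 2)⁻¹ * d a := by
        intro a
        simp only [hd]
        ring
      rw [Finset.sum_congr rfl fun a _ => h1 a, Finset.sum_add_distrib, Finset.sum_sub_distrib,
        ← Finset.mul_sum, ← Finset.mul_sum, ← Finset.mul_sum, hsd, mul_zero, add_zero]
      simp only [entF]
      ring
    have ht' : t = 1 - N * ε := by linarith
    have hid : t * entF F + (1 - t) * klFromUnif M F
        = entF F - (∑ a, d a * (Real.logb 2 (F a) + (Real.log 2)⁻¹)) - N * ε * Real.logb 2 N := by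
      rw [hkl, hL, ht']
      field_simp
      ring
    have hexpr : entF (symOut M q F) - (t * entF F + (1 - t) * klFromUnif M F)
          - N * ε * Real.logb 2 N
        = (-(∑ a, (F a + d a) * Real.logb 2 (F a + d a))) + (∑ a, F a * Real.logb 2 (F a))
          + ∑ a, d a * (Real.logb 2 (F a) + (Real.log 2)⁻¹) := by
      rw [hid, hEq]
      simp only [entF]
      ring
    rw [hexpr]
    refine (sum_taylor_bound F d hFpos hpos_fd).trans_eq ?_
    rw [Finset.sum_mul]
    exact Finset.sum_congr rfl fun a _ => by simp only [hd]; ring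
  have hW := main (marg2 P w wb) hposW hsumW
  have hU := main (marg2 P u ub) hposU hsumU
  have e1 : miF (symOut M q (marg2 P w wb)) = 2 * Real.logb 2 M - entF (symOut M q (marg2 P w wb)) :=
    hmiF _ (hrowOut _ hrowW q) (hcolOut _ hcolW q)
  have e2 : miF (symOut M q (marg2 P u ub)) = 2 * Real.logb 2 M - entF (symOut M q (marg2 P u ub)) :=
    hmiF _ (hrowOut _ hrowU q) (hcolOut _ hcolU q)
  have e3 : miF (marg2 P w wb) = 2 * Real.logb 2 M - entF (marg2 P w wb) := hmiF _ hrowW hcolW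
  have e4 : miF (marg2 P u ub) = 2 * Real.logb 2 M - entF (marg2 P u ub) := hmiF _ hrowU hcolU
  have hX : miF (symOut M q (marg2 P w wb)) - miF (symOut M q (marg2 P u ub))
        - ((1 - q) ^ 2 * (miF (marg2 P w wb) - miF (marg2 P u ub))
          - (1 - (1 - q) ^ 2) *
            (klFromUnif M (marg2 P w wb) - klFromUnif M (marg2 P u ub)))
      = (entF (symOut M q (marg2 P u ub)) - (t * entF (marg2 P u ub)
            + (1 - t) * klFromUnif M (marg2 P u ub)) - N * ε * Real.logb 2 N)
        - (entF (symOut M q (marg2 P w wb)) - (t * entF (marg2 P w wb)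
            + (1 - t) * klFromUnif M (marg2 P w wb)) - N * ε * Real.logb 2 N) := by
    rw [e1, e2, e3, e4, ← ht]
    ring
  rw [hX]
  calc _ ≤ |entF (symOut M q (marg2 P u ub)) - (t * entF (marg2 P u ub)
            + (1 - t) * klFromUnif M (marg2 P u ub)) - N * ε * Real.logb 2 N|
        + |entF (symOut M q (marg2 P w wb)) - (t * entF (marg2 P w wb)
            + (1 - t) * klFromUnif M (marg2 P w wb)) - N * ε * Real.logb 2 N| := abs_sub _ _
    _ ≤ (∑ a, (1 - N * marg2 P u ub a)^2 / (marg2 P u ub a * Real.log 2)) * ε ^ 2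
        + (∑ a, (1 - N * marg2 P w wb a)^2 / (marg2 P w wb a * Real.log 2)) * ε ^ 2 :=
      add_le_add hU hW
    _ ≤ _ := by nlinarith [sq_nonneg ε]


end TreePaper
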